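/- Let Ω ⊆ ℝⁿ be open, let f : Ω → ℝⁿ and A, B, M, N : Ω → ℝ be C¹, and define p(u) = (1, u¹, …, uⁿ, B(u), N(u), 0) and r(u) = (0, f¹(u), …, fⁿ(u), A(u), M(u), 1) in ℝ^{n+4}. If for every u ∈ Ω and every i the vector ∂r/∂uⁱ(u) lies in the linear span of {p(u), r(u), ∂p/∂u¹(u), …, ∂p/∂uⁿ(u)} (stability of tangent spaces along generators), then the conservation-law relations hold: ∂A/∂uⁱ = Σ_k (∂B/∂u^k)(∂f^k/∂uⁱ) and ∂M/∂uⁱ = Σ_k (∂N/∂u^k)(∂f^k/∂uⁱ) on Ω, i.e., B dx + A dt and N dx + M dt are additional conservation laws of the system with flux f. -/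

import Mathlib

/-- Conversely, if the tangent spaces to the ruled hypersurface of
a system of conservation laws are stable along the line generators — i.e. every
partial derivative `∂r/∂uⁱ(u)` lies in the span of
`{p(u), r(u), ∂p/∂u¹(u), …, ∂p/∂uⁿ(u)}`, where `p(u) = (1, u, B(u), N(u), 0)`
and `r(u) = (0, f(u), A(u), M(u), 1)` — then the conservation-law relations
`∂A/∂uⁱ = Σ_k (∂B/∂u^k)(∂f^k/∂uⁱ)` and `∂M/∂uⁱ = Σ_k (∂N/∂u^k)(∂f^k/∂uⁱ)`
hold on `Ω`, i.e. `B dx + A dt` and `N dx + M dt` are additional conservation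
laws of the system with flux `f`. -/
theorem stmt_1
    (n : ℕ) (Ω : Set (Fin n → ℝ)) (hΩ : IsOpen Ω)
    (f : (Fin n → ℝ) → (Fin n → ℝ))
    (A B M N : (Fin n → ℝ) → ℝ)
    (hf : ContDiffOn ℝ 1 f Ω) (hA : ContDiffOn ℝ 1 A Ω)
    (hB : ContDiffOn ℝ 1 B Ω) (hM : ContDiffOn ℝ 1 M Ω)
    (hN : ContDiffOn ℝ 1 N Ω)
    (p r : (Fin n → ℝ) → ℝ × (Fin n → ℝ) × ℝ × ℝ × ℝ)
    (hp : ∀ u, p u = (1, u, B u, N u, 0))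
    (hr : ∀ u, r u = (0, f u, A u, M u, 1))
    (hstable : ∀ u ∈ Ω, ∀ i : Fin n,
      fderiv ℝ r u (Pi.single i 1) ∈
        Submodule.span ℝ ({p u, r u} ∪
          Set.range fun l : Fin n => fderiv ℝ p u (Pi.single l 1))) :
    ∀ u ∈ Ω, ∀ i : Fin n,
      fderiv ℝ A u (Pi.single i 1) =
        ∑ k : Fin n, fderiv ℝ B u (Pi.single k 1) *
          fderiv ℝ (fun x => f x k) u (Pi.single i 1) ∧
      fderiv ℝ M u (Pi.single i 1) =
        ∑ k : Fin n, fderiv ℝ N u (Pi.single k 1) *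
          fderiv ℝ (fun x => f x k) u (Pi.single i 1) := by
  have hp' : p = fun u => (1, u, B u, N u, 0) := funext hp
  have hr' : r = fun u => (0, f u, A u, M u, 1) := funext hr
  subst hp' hr'
  intro u hu i
  have hmem := hΩ.mem_nhds hu
  have hfd : DifferentiableAt ℝ f u := (hf.differentiableOn one_ne_zero).differentiableAt hmem
  have hAd : DifferentiableAt ℝ A u := (hA.differentiableOn one_ne_zero).differentiableAt hmem
  have hBd : DifferentiableAt ℝ B u := (hB.differentiableOn one_ne_zero).differentiableAt hmem
  have hMd : DifferentiableAt ℝ M u := (hM.differentiableOn one_ne_zero).differentiableAt hmem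
  have hNd : DifferentiableAt ℝ N u := (hN.differentiableOn one_ne_zero).differentiableAt hmem
  have hdp : HasFDerivAt (fun u : Fin n → ℝ => ((1:ℝ), u, B u, N u, (0:ℝ)))
      ((0 : (Fin n → ℝ) →L[ℝ] ℝ).prod ((ContinuousLinearMap.id ℝ (Fin n → ℝ)).prod
        ((fderiv ℝ B u).prod ((fderiv ℝ N u).prod (0 : (Fin n → ℝ) →L[ℝ] ℝ))))) u :=
    HasFDerivAt.prodMk (hasFDerivAt_const (1:ℝ) u) (HasFDerivAt.prodMk (hasFDerivAt_id u)
      (HasFDerivAt.prodMk hBd.hasFDerivAt (HasFDerivAt.prodMk hNd.hasFDerivAt (hasFDerivAt_const (0:ℝ) u))))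
  have hdr : HasFDerivAt (fun u : Fin n → ℝ => ((0:ℝ), f u, A u, M u, (1:ℝ)))
      ((0 : (Fin n → ℝ) →L[ℝ] ℝ).prod ((fderiv ℝ f u).prod
        ((fderiv ℝ A u).prod ((fderiv ℝ M u).prod (0 : (Fin n → ℝ) →L[ℝ] ℝ))))) u :=
    HasFDerivAt.prodMk (hasFDerivAt_const (0:ℝ) u) (HasFDerivAt.prodMk hfd.hasFDerivAt
      (HasFDerivAt.prodMk hAd.hasFDerivAt (HasFDerivAt.prodMk hMd.hasFDerivAt (hasFDerivAt_const (1:ℝ) u))))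
  have hpe : ∀ l : Fin n, fderiv ℝ (fun u : Fin n → ℝ => ((1:ℝ), u, B u, N u, (0:ℝ))) u
      (Pi.single l 1) = (0, Pi.single l 1, fderiv ℝ B u (Pi.single l 1),
        fderiv ℝ N u (Pi.single l 1), 0) := by
    intro l; rw [hdp.fderiv]; rfl
  have hre : fderiv ℝ (fun u : Fin n → ℝ => ((0:ℝ), f u, A u, M u, (1:ℝ))) u
      (Pi.single i 1) = (0, fderiv ℝ f u (Pi.single i 1), fderiv ℝ A u (Pi.single i 1),
        fderiv ℝ M u (Pi.single i 1), 0) := by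
    rw [hdr.fderiv]; rfl
  have hspan := hstable u hu i
  rw [Submodule.span_union, Submodule.mem_sup] at hspan
  obtain ⟨y, hy, z, hz, heq⟩ := hspan
  rw [Submodule.mem_span_pair] at hy
  obtain ⟨a, b, hy⟩ := hy
  rw [Submodule.mem_span_range_iff_exists_fun ℝ] at hz
  obtain ⟨c, hz⟩ := hz
  rw [← hy, ← hz, hre] at heq
  simp only [hpe] at heq
  -- components
  have h1 := congrArg Prod.fst heq
  have h2 := congrArg (fun x => x.2.1) heq
  have h3 := congrArg (fun x => x.2.2.1) heq
  have h4 := congrArg (fun x => x.2.2.2.1) heq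
  have h5 := congrArg (fun x => x.2.2.2.2) heq
  simp only [Prod.fst_add, Prod.snd_add, Prod.smul_fst, Prod.smul_snd, Prod.fst_sum,
    Prod.snd_sum, smul_eq_mul, mul_one, mul_zero, Finset.sum_const_zero, add_zero, zero_add,
    mul_comm] at h1 h2 h3 h4 h5
  -- h1 : a = 0, h5 : b = 0
  have ha : a = 0 := by linarith [h1]
  have hb : b = 0 := by linarith [h5]
  subst ha hb
  -- coefficients c from h2
  have hck : ∀ k : Fin n, c k = fderiv ℝ f u (Pi.single i 1) k := by
    intro k
    have := congrFun h2 k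
    simpa [Finset.sum_apply, Pi.single_apply, mul_comm] using this
  have hcomp : ∀ k : Fin n, fderiv ℝ (fun x => f x k) u (Pi.single i 1)
      = fderiv ℝ f u (Pi.single i 1) k := by
    intro k
    have h := ((ContinuousLinearMap.proj k : (Fin n → ℝ) →L[ℝ] ℝ).hasFDerivAt.comp u
      hfd.hasFDerivAt).fderiv
    rw [show (fun x => f x k) = (ContinuousLinearMap.proj k : (Fin n → ℝ) →L[ℝ] ℝ) ∘ f from rfl,
      h]
    rfl
  constructor
  · rw [← h3]
    rw [zero_mul, zero_mul, zero_add, zero_add]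
    refine Finset.sum_congr rfl fun k _ => ?_
    rw [hck k, hcomp k]; ring
  · rw [← h4]
    rw [zero_mul, zero_mul, zero_add, zero_add]
    refine Finset.sum_congr rfl fun k _ => ?_
    rw [hck k, hcomp k]; ring
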